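/- arXiv:1311.5572 — 6 statements merged into one kernel-verified Lean document; each statement's English description precedes it below -/
import Mathlib

section
/- Let Tr be a DetLinTT^V and t ∈ dom(Tr). Then there exists an injective map φ from the set of value-carrying positions of Tr(t) to pos(t) such that val(Tr(t), w) = val(t, φ(w)) for every value-carrying position w of Tr(t) (data values are transferred from input to output without duplication). -/
/-! Data trees over a ranked alphabet: each node is labeled by a symbol
(respecting arities) and optionally carries a data value in ℕ. -/

inductive DTree (S : Type) (ar : S → ℕ) : Type
  | node (σ : S) (val : Option ℕ) (children : Fin (ar σ) → DTree S ar) : DTree S ar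

namespace DTree

variable {S : Type} {ar : S → ℕ}

/-- Root label. -/
def label : DTree S ar → S
  | node σ _ _ => σ

/-- Root data value (if any). -/
def rootVal : DTree S ar → Option ℕ
  | node _ v _ => v

/-- Subtree at a position (a position is a list of child indices). -/
def subtreeAt : DTree S ar → List ℕ → Option (DTree S ar)
  | t, [] => some t
  | node σ _ c, i :: p => if h : i < ar σ then (c ⟨i, h⟩).subtreeAt p else none

/-- The set of positions of a data tree. -/
def pos (t : DTree S ar) : Set (List ℕ) := {v | (t.subtreeAt v).isSome}

/-- The data value carried at position `v` (if the position exists and carries one). -/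
def valAt (t : DTree S ar) (v : List ℕ) : Option ℕ :=
  (t.subtreeAt v).bind rootVal

/-- `t⁻`: erase all data values. A (plain) tree is a data tree of the form `t.erase`. -/
def erase : DTree S ar → DTree S ar
  | node σ _ c => node σ none fun i => (c i).erase

/-- A data tree is proper if every node carries a data value. -/
inductive Proper : DTree S ar → Prop
  | node (σ : S) (ν : ℕ) (c : Fin (ar σ) → DTree S ar) :
      (∀ i, Proper (c i)) → Proper (DTree.node σ (some ν) c)

/-- `t^(v←ν)`: set the data value at position `v` to `ν`. -/
def setVal : DTree S ar → List ℕ → ℕ → DTree S ar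
  | node σ _w c, [], ν => node σ (some ν) c
  | node σ w c, i :: p, ν =>
      node σ w fun k => if (k : ℕ) = i then (c k).setVal p ν else c k

end DTree

/-! Tree automata. -/

/-- A (top-down) tree automaton over the ranked alphabet `(S, ar)` with state set `P`:
initial states and transition rules `p → σ(p₁,…,p_n)` (with `n = ar σ`). -/
structure TA (S : Type) (ar : S → ℕ) (P : Type) where
  init : Set P
  rules : P → (σ : S) → (Fin (ar σ) → P) → Prop

namespace TA

variable {S : Type} {ar : S → ℕ} {P : Type}

/-- `m` is an accepting run of `A` on `t`: the root gets an initial state and every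
position is consistent with some transition rule.  (Runs only look at labels, so a
run on `t` is the same thing as a run on `t⁻`.) -/
def IsRun (A : TA S ar P) (t : DTree S ar) (m : List ℕ → P) : Prop :=
  m [] ∈ A.init ∧
    ∀ v s, t.subtreeAt v = some s →
      A.rules (m v) s.label fun i => m (v ++ [(i : ℕ)])

/-- The language of a tree automaton. -/
def Lang (A : TA S ar P) : Set (DTree S ar) := {t | ∃ m, A.IsRun t m}

/-- `A` is reduced: every state is assigned to some position by some accepting run
(hence there are no useless states, and so no useless rules). -/
def Reduced (A : TA S ar P) : Prop :=
  ∀ p : P, ∃ (t : DTree S ar) (m : List ℕ → P) (v : List ℕ),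
    A.IsRun t m ∧ v ∈ t.pos ∧ m v = p

end TA

/-! Run-based n-ary queries. -/

/-- A run-based `n`-ary query `(A, S)`: a tree automaton together with a set of
`n`-tuples of states. -/
structure NRQ (S : Type) (ar : S → ℕ) (P : Type) (n : ℕ) where
  aut : TA S ar P
  sel : Set (Fin n → P)

namespace NRQ

variable {S : Type} {ar : S → ℕ} {P : Type} {n : ℕ}

/-- `Q(t)`: the set of position tuples selected by some accepting run on `t⁻`. -/
def ans (Q : NRQ S ar P n) (t : DTree S ar) : Set (Fin n → List ℕ) :=
  {vs | (∀ i, vs i ∈ t.pos) ∧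
    ∃ m, Q.aut.IsRun t.erase m ∧ (fun i => m (vs i)) ∈ Q.sel}

/-- `val(Q(t))`: the corresponding tuples of data values. -/
def valAns (Q : NRQ S ar P n) (t : DTree S ar) : Set (Fin n → ℕ) :=
  {ds | ∃ vs ∈ Q.ans t, ∀ i, t.valAt (vs i) = some (ds i)}

end NRQ

/-! Contexts over an output alphabet, with variables `x₁,…,x_n`. -/

inductive Ctx (D : Type) (ar : D → ℕ) (n : ℕ) : Type
  | var (i : Fin n)
  | node (d : D) (children : Fin (ar d) → Ctx D ar n)

namespace Ctx

variable {D : Type} {ar : D → ℕ} {n : ℕ}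

/-- Variable `i` occurs in the context. -/
def HasVar : Ctx D ar n → Fin n → Prop
  | var j, i => j = i
  | node _ c, i => ∃ k, (c k).HasVar i

/-- Variable `i` occurs at position `v` of the context. -/
def VarAt : Ctx D ar n → Fin n → List ℕ → Prop
  | var j, i, v => j = i ∧ v = []
  | node _ _, _, [] => False
  | node d c, i, k :: p => ∃ h : k < ar d, (c ⟨k, h⟩).VarAt i p

/-- Position `v` of the context is labeled by an output symbol. -/
def SymAt : Ctx D ar n → List ℕ → Prop
  | var _, _ => False
  | node _ _, [] => True
  | node d c, k :: p => ∃ h : k < ar d, (c ⟨k, h⟩).SymAt p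

/-- The context is linear: each variable occurs at most once. -/
def Linear (C : Ctx D ar n) : Prop :=
  ∀ i v w, C.VarAt i v → C.VarAt i w → v = w

/-- Instantiate a context: substitute `sub i` for variable `xᵢ`, and place the data
value `ν` at the (optional) designated position `j`; all other output nodes carry
no value. -/
def inst : Ctx D ar n → (Fin n → DTree D ar) → Option (List ℕ) → ℕ → DTree D ar
  | var i, sub, _, _ => sub i
  | node d c, sub, j, ν =>
      DTree.node d (if j = some [] then some ν else none) fun k =>
        (c k).inst sub
          (match j with
            | some (m :: p) => if m = (k : ℕ) then some p else none
            | _ => none) ν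

end Ctx

/-! Linear top-down data tree transducers (LinTT^V). -/

/-- A transduction rule `p(σ^(z)(x₁,…,x_n)) → C^(j←z)[p₁(x₁),…,p_n(x_n)]`
(the value-position designation `vpos` is optional). -/
structure TRule (S : Type) (arS : S → ℕ) (D : Type) (arD : D → ℕ) (P : Type) where
  st : P
  sym : S
  chst : Fin (arS sym) → P
  rhs : Ctx D arD (arS sym)
  vpos : Option (List ℕ)

/-- Well-formedness: the right-hand side is linear and the designated value
position (if any) is an output-symbol-labeled position of the context. -/
def TRule.WF {S D P : Type} {arS : S → ℕ} {arD : D → ℕ} (r : TRule S arS D arD P) : Prop :=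
  r.rhs.Linear ∧ ∀ v ∈ r.vpos, r.rhs.SymAt v

/-- A linear top-down data tree transducer. -/
structure LinTTV (S : Type) (arS : S → ℕ) (D : Type) (arD : D → ℕ) (P : Type) where
  init : Set P
  rules : Set (TRule S arS D arD P)
  wf : ∀ r ∈ rules, r.WF

namespace LinTTV

variable {S D P : Type} {arS : S → ℕ} {arD : D → ℕ}

/-- `Deriv Tr p t t'`: starting in state `p`, the transducer rewrites `p(t)` to the
output data tree `t'`.  A rule applies to `p(σ^(ν)(t₁,…,t_n))` and produces its
right-hand side context instantiated at value `ν`, where each variable `xᵢ`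
occurring in the context is replaced by an output of the derivation from
`pᵢ(tᵢ)` (subtrees at non-occurring variables are deleted). -/
inductive Deriv (Tr : LinTTV S arS D arD P) : P → DTree S arS → DTree D arD → Prop
  | step (r : TRule S arS D arD P) (hr : r ∈ Tr.rules) (ν : ℕ)
      (ts : Fin (arS r.sym) → DTree S arS) (sub : Fin (arS r.sym) → DTree D arD)
      (h : ∀ i, r.rhs.HasVar i → Deriv Tr (r.chst i) (ts i) (sub i)) :
      Deriv Tr r.st (DTree.node r.sym (some ν) ts) (r.rhs.inst sub r.vpos ν)

/-- `rel Tr t t'` means `(t, t') ∈ rel(Tr)`: `t` is a proper input data tree and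
`p_I(t) ⇒* t'` for some initial state `p_I`. -/
def rel (Tr : LinTTV S arS D arD P) (t : DTree S arS) (t' : DTree D arD) : Prop :=
  t.Proper ∧ ∃ p ∈ Tr.init, Tr.Deriv p t t'

/-- The domain of the transducer. -/
def dom (Tr : LinTTV S arS D arD P) : Set (DTree S arS) := {t | ∃ t', Tr.rel t t'}

/-- The range of the transducer. -/
def rng (Tr : LinTTV S arS D arD P) : Set (DTree D arD) := {t' | ∃ t, Tr.rel t t'}

/-- `Tr⁻¹(t_d)`. -/
def preim (Tr : LinTTV S arS D arD P) (td : DTree D arD) : Set (DTree S arS) :=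
  {t | Tr.rel t td}

/-- Deterministic: exactly one initial state, and for each state and input symbol
at most one rule. -/
def Deterministic (Tr : LinTTV S arS D arD P) : Prop :=
  (∃ p, Tr.init = {p}) ∧
    ∀ r₁ ∈ Tr.rules, ∀ r₂ ∈ Tr.rules, r₁.st = r₂.st → r₁.sym = r₂.sym → r₁ = r₂

end LinTTV

/-! Query preservation, stated for an arbitrary transformation relation
`R : input data trees → output data trees → Prop`. -/

/-- `R` (strongly) preserves `Q`: there is an `n`-ary query `Q'` over the output
alphabet (a run-based query with a finite state set whose selected tuples consist of
pairwise distinct states) with `val(Q'(Tr(t))) = val(Q(t))` for all `t ∈ dom`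
(Equation (1)). -/
def StronglyPreservesRel {S D PQ : Type} {arS : S → ℕ} {arD : D → ℕ} {n : ℕ}
    (R : DTree S arS → DTree D arD → Prop) (Q : NRQ S arS PQ n) : Prop :=
  ∃ (P' : Type) (_ : Fintype P') (Q' : NRQ D arD P' n),
    (∀ s ∈ Q'.sel, Function.Injective s) ∧
      ∀ t t', R t t' → Q'.valAns t' = Q.valAns t

/-- `R` weakly preserves `Q`: there is an `n`-ary query `Q'` over the output
alphabet such that for every `t_d` in the range,
`val(Q'(t_d)) = ⋃_{t ∈ R⁻¹(t_d)} val(Q(t))` (Equation (2)). -/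
def WeaklyPreservesRel {S D PQ : Type} {arS : S → ℕ} {arD : D → ℕ} {n : ℕ}
    (R : DTree S arS → DTree D arD → Prop) (Q : NRQ S arS PQ n) : Prop :=
  ∃ (P' : Type) (_ : Fintype P') (Q' : NRQ D arD P' n),
    (∀ s ∈ Q'.sel, Function.Injective s) ∧
      ∀ td, (∃ t, R t td) → Q'.valAns td = ⋃ t ∈ {t | R t td}, Q.valAns t

namespace Ctx

variable {D : Type} {arD : D → ℕ} {n : ℕ}

/-- Var positions of a context determine the variable and are pairwise incomparable. -/
theorem varAt_unique (C : Ctx D arD n) :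
    ∀ {i i' : Fin n} {u u' w w' : List ℕ},
      C.VarAt i u → C.VarAt i' u' → u ++ w = u' ++ w' → i = i' ∧ u = u' := by
  induction C with
  | var j =>
    intro i i' u u' w w' h1 h2 _
    obtain ⟨rfl, rfl⟩ := h1; obtain ⟨rfl, rfl⟩ := h2; exact ⟨rfl, rfl⟩
  | node d c ih =>
    intro i i' u u' w w' h1 h2 he
    cases u with
    | nil => exact h1.elim
    | cons k r =>
      cases u' with
      | nil => exact h2.elim
      | cons k' r' =>
        obtain ⟨hk, h1'⟩ := h1
        obtain ⟨hk', h2'⟩ := h2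
        have hkk : k = k' := by simpa using congrArg List.head? he
        subst hkk
        have he' : r ++ w = r' ++ w' := by simpa using he
        have hcv : HEq (c ⟨k, hk⟩) (c ⟨k, hk'⟩) := by rfl
        obtain ⟨hi, hu⟩ := ih ⟨k, hk⟩ h1' (by convert h2') he'
        exact ⟨hi, by rw [hu]⟩

theorem varAt_hasVar (C : Ctx D arD n) :
    ∀ {i : Fin n} {u : List ℕ}, C.VarAt i u → C.HasVar i := by
  induction C with
  | var j => intro i u h; exact h.1
  | node d c ih =>
    intro i u h
    cases u with
    | nil => exact h.elim
    | cons k r =>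
      obtain ⟨hk, h'⟩ := h
      exact ⟨⟨k, hk⟩, ih _ h'⟩

/-- The designated value position passed to child `k`. -/
def childDes (j : Option (List ℕ)) (k : ℕ) : Option (List ℕ) :=
  match j with
  | some (m :: q) => if m = k then some q else none
  | _ => none

theorem inst_node (d : D) (c : Fin (arD d) → Ctx D arD n) (sub : Fin n → DTree D arD)
    (j : Option (List ℕ)) (ν : ℕ) :
    (Ctx.node d c).inst sub j ν =
      DTree.node d (if j = some [] then some ν else none)
        (fun k => (c k).inst sub (childDes j (k : ℕ)) ν) := by
  rcases j with _ | (_ | ⟨m, q⟩) <;> rfl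

/-- Where can a value sit in an instantiated context: either inside a substituted
subtree (below a variable position), or at the designated position. -/
theorem inst_valAt_cases (C : Ctx D arD n) (sub : Fin n → DTree D arD) :
    ∀ (j : Option (List ℕ)) (ν : ℕ) (w : List ℕ),
    ((C.inst sub j ν).valAt w).isSome →
    (∃ i u w', w = u ++ w' ∧ C.VarAt i u ∧
        (C.inst sub j ν).valAt w = (sub i).valAt w') ∨
    ((∀ i u w', w = u ++ w' → ¬C.VarAt i u) ∧ j = some w ∧
        (C.inst sub j ν).valAt w = some ν) := by
  induction C with
  | var i =>
    intro j ν w _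
    exact Or.inl ⟨i, [], w, rfl, ⟨rfl, rfl⟩, rfl⟩
  | node d c ih =>
    intro j ν w h
    cases w with
    | nil =>
      right
      have hval : ((node d c).inst sub j ν).valAt [] =
          (if j = some [] then some ν else none) := rfl
      have hj : j = some [] := by
        by_contra hj
        rw [hval, if_neg hj] at h
        simp at h
      refine ⟨?_, hj, by rw [hval, if_pos hj]⟩
      intro i u w' he hv
      rcases List.append_eq_nil_iff.mp he.symm with ⟨rfl, rfl⟩
      exact hv
    | cons k p =>
      by_cases hk : k < arD d
      · have hval : ((node d c).inst sub j ν).valAt (k :: p) =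
            ((c ⟨k, hk⟩).inst sub (childDes j k) ν).valAt p := by
          rw [inst_node]
          simp only [DTree.valAt, DTree.subtreeAt, dif_pos hk]
        rw [hval] at h
        rcases ih ⟨k, hk⟩ _ ν p h with ⟨i, u, w', hw, hv, heq⟩ | ⟨hnd, hjp, heq⟩
        · exact Or.inl ⟨i, k :: u, w', by simp [hw], ⟨hk, hv⟩, by rw [hval, heq]⟩
        · right
          refine ⟨?_, ?_, by rw [hval, heq]⟩
          · intro i u w' he hv
            cases u with
            | nil => exact hv
            | cons m r =>
              obtain ⟨hm, hv'⟩ := hv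
              have hmk : m = k := by simpa using congrArg List.head? he.symm
              subst hmk
              have hpr : p = r ++ w' := by simpa using he
              exact hnd i r w' hpr hv'
          · cases j with
            | none => simp [childDes] at hjp
            | some l =>
              cases l with
              | nil => simp [childDes] at hjp
              | cons m q =>
                by_cases hm : m = k
                · simp only [childDes, if_pos hm] at hjp
                  rw [hm, Option.some.inj hjp]
                · simp [childDes, if_neg hm] at hjp
      · exfalso
        have hnone : ((node d c).inst sub j ν).valAt (k :: p) = none := by
          rw [inst_node]
          simp only [DTree.valAt, DTree.subtreeAt, dif_neg hk]
          rfl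
        rw [hnone] at h
        simp at h

end Ctx

theorem LinTTV.deriv_phi {S D PT : Type} {arS : S → ℕ} {arD : D → ℕ}
    (Tr : LinTTV S arS D arD PT) (p : PT) (t : DTree S arS) (t' : DTree D arD)
    (h : Tr.Deriv p t t') :
    ∃ φ : List ℕ → List ℕ,
      Set.InjOn φ {w | (t'.valAt w).isSome} ∧
        ∀ w, (t'.valAt w).isSome → φ w ∈ t.pos ∧ t.valAt (φ w) = t'.valAt w := by
  induction h with
  | step r hr ν ts sub hder ih =>
    classical
    choose Φ hΦ using fun (i : Fin (arS r.sym)) (hv : r.rhs.HasVar i) => ih i hv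
    set Φ' : Fin (arS r.sym) → List ℕ → List ℕ :=
      fun i => if hv : r.rhs.HasVar i then Φ i hv else id with hΦ'
    have hΦ'spec : ∀ i, r.rhs.HasVar i →
        Set.InjOn (Φ' i) {w | ((sub i).valAt w).isSome} ∧
          ∀ w, ((sub i).valAt w).isSome →
            Φ' i w ∈ (ts i).pos ∧ (ts i).valAt (Φ' i w) = (sub i).valAt w := by
      intro i hv
      simpa only [hΦ', dif_pos hv] using hΦ i hv
    set Pd : List ℕ → Prop := fun w =>
      ∃ q : Fin (arS r.sym) × List ℕ × List ℕ,
        w = q.2.1 ++ q.2.2 ∧ r.rhs.VarAt q.1 q.2.1 ∧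
          ((sub q.1).valAt q.2.2).isSome with hPd
    set φ : List ℕ → List ℕ := fun w =>
      if hd : Pd w then (hd.choose.1 : ℕ) :: Φ' hd.choose.1 hd.choose.2.2 else []
      with hφ
    have hlin : r.rhs.Linear := (Tr.wf r hr).1
    have key : ∀ w, ((r.rhs.inst sub r.vpos ν).valAt w).isSome →
        (φ w = [] ∧ r.vpos = some w ∧ (r.rhs.inst sub r.vpos ν).valAt w = some ν) ∨
        (∃ i u w', w = u ++ w' ∧ r.rhs.VarAt i u ∧ φ w = (i : ℕ) :: Φ' i w' ∧
          ((sub i).valAt w').isSome ∧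
            (r.rhs.inst sub r.vpos ν).valAt w = (sub i).valAt w') := by
      intro w hw
      rcases Ctx.inst_valAt_cases r.rhs sub r.vpos ν w hw with
        ⟨i, u, w', hwd, hv, heq⟩ | ⟨hnd, hj, heq⟩
      · right
        have hsome : ((sub i).valAt w').isSome := by rw [← heq]; exact hw
        have hd : Pd w := ⟨⟨i, u, w'⟩, hwd, hv, hsome⟩
        obtain ⟨hwd0, hv0, hsome0⟩ := hd.choose_spec
        have huniq := Ctx.varAt_unique r.rhs hv0 hv (hwd0.symm.trans hwd)
        have hww' : hd.choose.2.2 = w' := by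
          have hcat := hwd0.symm.trans hwd
          rw [huniq.2] at hcat
          exact List.append_cancel_left hcat
        refine ⟨i, u, w', hwd, hv, ?_, hsome, heq⟩
        rw [hφ]
        simp only [dif_pos hd]
        rw [huniq.1, hww']
      · left
        have hnd' : ¬Pd w := by
          rintro ⟨⟨i, u, w'⟩, hwd, hv, -⟩
          exact hnd i u w' hwd hv
        exact ⟨by rw [hφ]; simp only [dif_neg hnd'], hj, heq⟩
    refine ⟨φ, ?_, ?_⟩
    · intro w₁ hw₁ w₂ hw₂ heq
      rcases key w₁ hw₁ with ⟨he₁, hj₁, -⟩ | ⟨i₁, u₁, w₁', hwd₁, hv₁, he₁, hs₁, -⟩ <;>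
        rcases key w₂ hw₂ with ⟨he₂, hj₂, -⟩ | ⟨i₂, u₂, w₂', hwd₂, hv₂, he₂, hs₂, -⟩
      · exact Option.some.inj (hj₁.symm.trans hj₂)
      · rw [he₁, he₂] at heq; exact absurd heq (by simp)
      · rw [he₁, he₂] at heq; exact absurd heq (by simp)
      · rw [he₁, he₂] at heq
        have hii : i₁ = i₂ := Fin.ext (by injection heq)
        subst hii
        have hΦeq : Φ' i₁ w₁' = Φ' i₁ w₂' := by injection heq
        have huu : u₁ = u₂ := hlin i₁ u₁ u₂ hv₁ hv₂
        have hww : w₁' = w₂' :=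
          (hΦ'spec i₁ (r.rhs.varAt_hasVar hv₁)).1 hs₁ hs₂ hΦeq
        rw [hwd₁, hwd₂, huu, hww]
    · intro w hw
      rcases key w hw with ⟨he, -, hval⟩ | ⟨i, u, w', hwd, hv, he, hs, hval⟩
      · rw [he]
        constructor
        · simp [DTree.pos, DTree.subtreeAt]
        · rw [hval]; rfl
      · rw [he]
        obtain ⟨hpos, hvaleq⟩ := (hΦ'spec i (r.rhs.varAt_hasVar hv)).2 w' hs
        have hsub : (DTree.node r.sym (some ν) ts).subtreeAt ((i : ℕ) :: Φ' i w') =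
            (ts i).subtreeAt (Φ' i w') := by
          simp only [DTree.subtreeAt, dif_pos i.isLt, Fin.eta]
        constructor
        · simp only [DTree.pos, Set.mem_setOf_eq, hsub]
          exact hpos
        · rw [hval, ← hvaleq]
          simp only [DTree.valAt, hsub]

/-- Let Tr be a DetLinTT^V and t ∈ dom(Tr). Then there is an injective
map φ from the value-carrying positions of Tr(t) to pos(t) with
val(Tr(t), w) = val(t, φ(w)) for every value-carrying position w of Tr(t)
(data values are transferred from input to output without duplication). -/
theorem detLinTTV_values_no_duplication {S D PT : Type} {arS : S → ℕ} {arD : D → ℕ}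
    [Fintype S] [Fintype D] [Fintype PT]
    (Tr : LinTTV S arS D arD PT) (hdet : Tr.Deterministic)
    (t : DTree S arS) (t' : DTree D arD) (h : Tr.rel t t') :
    ∃ φ : List ℕ → List ℕ,
      Set.InjOn φ {w | (t'.valAt w).isSome} ∧
        ∀ w, (t'.valAt w).isSome → φ w ∈ t.pos ∧ t.valAt (φ w) = t'.valAt w := by
  obtain ⟨_, p, _, hd⟩ := h
  exact Tr.deriv_phi p t t' hd
end

section
/- A DetLinTT^V Tr (strongly) preserves an n-RQ Q if and only if (1) Tr weakly preserves Q and (2) for every t_d ∈ rng(Tr) and all t₁, t₂ ∈ Tr⁻¹(t_d), val(Q(t₁)) = val(Q(t₂)). -/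
/-- A DetLinTT^V Tr (strongly) preserves an n-RQ Q iff (1) Tr weakly
preserves Q and (2) for every t_d ∈ rng(Tr) and all t₁, t₂ ∈ Tr⁻¹(t_d),
val(Q(t₁)) = val(Q(t₂)). -/
theorem preserves_iff_weak_and_constant {S D PT PQ : Type} {arS : S → ℕ} {arD : D → ℕ}
    [Fintype S] [Fintype D] [Fintype PT] [Fintype PQ] {n : ℕ}
    (Tr : LinTTV S arS D arD PT) (hdet : Tr.Deterministic)
    (Q : NRQ S arS PQ n) (hsel : ∀ s ∈ Q.sel, Function.Injective s) :
    StronglyPreservesRel Tr.rel Q ↔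
      WeaklyPreservesRel Tr.rel Q ∧
        ∀ td ∈ Tr.rng, ∀ t₁ ∈ Tr.preim td, ∀ t₂ ∈ Tr.preim td,
          Q.valAns t₁ = Q.valAns t₂ := by
  constructor
  · rintro ⟨P', fp, Q', hinj, heq⟩
    refine ⟨⟨P', fp, Q', hinj, ?_⟩, ?_⟩
    · rintro td ⟨t, ht⟩
      ext d
      simp only [Set.mem_iUnion, Set.mem_setOf_eq]
      constructor
      · intro hd; exact ⟨t, ht, (heq t td ht) ▸ hd⟩
      · rintro ⟨t', ht', hd⟩; exact (heq t' td ht') ▸ hd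
    · rintro td _ t₁ h₁ t₂ h₂
      rw [← heq t₁ td h₁, ← heq t₂ td h₂]
  · rintro ⟨⟨P', fp, Q', hinj, heq⟩, hconst⟩
    refine ⟨P', fp, Q', hinj, ?_⟩
    intro t td ht
    rw [heq td ⟨t, ht⟩]
    ext d
    simp only [Set.mem_iUnion, Set.mem_setOf_eq]
    constructor
    · rintro ⟨t', ht', hd⟩
      exact hconst td ⟨t, ht⟩ t' ht' t ht ▸ hd
    · intro hd; exact ⟨t, ht, hd⟩
end

section
/- Let Tr be a DetLinTT^V and Q = (A, {p}) a 1-RQ. Suppose there exist t ∈ dom(Tr), a position ṽ ∈ pos(t), and a run m ∈ run(A, t⁻) with m(ṽ) = p, such that for every ν ∈ ℕ the data tree t^(ṽ←ν) satisfies Tr(t^(ṽ←ν)) = Tr(t). Then ⋃_{t' ∈ Tr⁻¹(Tr(t))} val(Q(t')) = ℕ. -/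
theorem DTree.erase_setVal {S : Type} {ar : S → ℕ} :
    ∀ (t : DTree S ar) (v : List ℕ) (ν : ℕ), (t.setVal v ν).erase = t.erase
  | DTree.node σ w c, [], ν => rfl
  | DTree.node σ w c, i :: p, ν => by
      simp only [DTree.setVal, DTree.erase, DTree.node.injEq, heq_eq_eq, true_and]
      funext k
      by_cases h : (k : ℕ) = i
      · simp [h, DTree.erase_setVal (c k) p ν]
      · simp [h]

theorem DTree.subtreeAt_setVal {S : Type} {ar : S → ℕ} :
    ∀ (t : DTree S ar) (v : List ℕ) (ν : ℕ) (s : DTree S ar), t.subtreeAt v = some s →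
      (t.setVal v ν).subtreeAt v = some (s.setVal [] ν)
  | DTree.node σ w c, [], ν, s, hs => by
      simp only [DTree.subtreeAt, Option.some.injEq] at hs
      subst hs; rfl
  | DTree.node σ w c, i :: p, ν, s, hs => by
      simp only [DTree.subtreeAt] at hs
      by_cases h : i < ar σ
      · simp only [h, dif_pos] at hs
        simpa [DTree.setVal, DTree.subtreeAt, h] using
          DTree.subtreeAt_setVal (c ⟨i, h⟩) p ν s hs
      · simp [h] at hs

/-- Let Tr be a DetLinTT^V and Q = (A, {p}) a 1-RQ. Suppose there are
t ∈ dom(Tr), a position vt ∈ pos(t), and a run m ∈ run(A, t⁻) with m(vt) = p, such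
that Tr(t^(vt←ν)) = Tr(t) for every ν ∈ ℕ. Then
⋃_{t' ∈ Tr⁻¹(Tr(t))} val(Q(t')) = ℕ. -/
theorem deleted_query_position_union_univ {S D PT PQ : Type} {arS : S → ℕ}
    {arD : D → ℕ} [Fintype S] [Fintype D] [Fintype PT] [Fintype PQ]
    (Tr : LinTTV S arS D arD PT) (hdet : Tr.Deterministic)
    (A : TA S arS PQ) (p : PQ)
    (t : DTree S arS) (td : DTree D arD) (htd : Tr.rel t td)
    (vt : List ℕ) (hv : vt ∈ t.pos)
    (m : List ℕ → PQ) (hm : A.IsRun t.erase m) (hmp : m vt = p)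
    (hall : ∀ ν : ℕ, Tr.rel (t.setVal vt ν) td) :
    ⋃ t' ∈ Tr.preim td, (NRQ.mk A {fun _ : Fin 1 => p}).valAns t' = Set.univ := by
  apply Set.eq_univ_of_forall
  intro ds
  obtain ⟨s, hs⟩ := Option.isSome_iff_exists.mp hv
  refine Set.mem_iUnion.mpr ⟨t.setVal vt (ds 0), Set.mem_iUnion.mpr ⟨hall (ds 0), ?_⟩⟩
  have hsub := DTree.subtreeAt_setVal t vt (ds 0) s hs
  refine ⟨fun _ => vt, ⟨fun i => ?_, m, ?_, ?_⟩, fun i => ?_⟩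
  · simp [DTree.pos, hsub]
  · rwa [DTree.erase_setVal]
  · simp only [Set.mem_singleton_iff]
    funext i; exact hmp
  · have : ds i = ds 0 := by rw [Subsingleton.elim i 0]
    rw [this]
    cases s with
    | node σ w c => simp [DTree.valAt, hsub, DTree.setVal, DTree.rootVal]
end

section
/- For every n-RQ Q = (A, {s}) whose selection set is a single n-tuple s of pairwise distinct states, there exists an n-RQ Q̃ = (Ã, S̃) with Q̃(t) = Q(t) for every data tree t, such that (1) there exist pairwise disjoint subsets S₁, …, S_n of the state set of Ã with S̃ = S₁ × ⋯ × S_n, and (2) for every tree t⁻ ∈ L(Ã), every accepting run m ∈ run(Ã, t⁻), and every i ∈ {1,…,n}, there exists exactly one position v ∈ pos(t) with m(v) ∈ Sᵢ. -/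
section AuxLemmas

namespace DTree
variable {S : Type} {ar : S → ℕ}

theorem subtreeAt_append' (t : DTree S ar) (v w : List ℕ) :
    t.subtreeAt (v ++ w) = (t.subtreeAt v).bind (·.subtreeAt w) := by
  induction v generalizing t with
  | nil => simp [subtreeAt]
  | cons i p ih =>
    cases t with
    | node σ val c =>
      simp only [List.cons_append, subtreeAt]
      split
      · exact ih _
      · rfl

theorem subtreeAt_erase' (t : DTree S ar) (v : List ℕ) :
    t.erase.subtreeAt v = (t.subtreeAt v).map erase := by
  induction v generalizing t with
  | nil => simp [subtreeAt]
  | cons i p ih =>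
    cases t with
    | node σ val c =>
      simp only [erase, subtreeAt]
      split
      · exact ih _
      · rfl

theorem pos_erase' (t : DTree S ar) : t.erase.pos = t.pos := by
  ext v
  simp [pos, subtreeAt_erase']

theorem subtreeAt_child' {t : DTree S ar} {v : List ℕ} {σ : S} {w : Option ℕ}
    {c : Fin (ar σ) → DTree S ar} (h : t.subtreeAt v = some (node σ w c))
    (j : Fin (ar σ)) : t.subtreeAt (v ++ [(j : ℕ)]) = some (c j) := by
  rw [subtreeAt_append', h]
  simp [subtreeAt, j.isLt]

end DTree

end AuxLemmas

section AuxTA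

variable {S PQ : Type} {arS : S → ℕ} {n : ℕ}

/-- The normal-form automaton: states carry "marked here" and "marked in subtree" flags. -/
def auxTA (A : TA S arS PQ) (s : Fin n → PQ) :
    TA S arS (PQ × (Fin n → Bool) × (Fin n → Bool)) where
  init := {q | q.1 ∈ A.init ∧ ∀ k, q.2.2 k = true}
  rules := fun q σ ch =>
    A.rules q.1 σ (fun j => (ch j).1) ∧
    (∀ k, q.2.1 k = true → q.1 = s k) ∧
    (∀ k, (q.2.2 k = true ↔ (q.2.1 k = true ∨ ∃ j, (ch j).2.2 k = true))) ∧
    (∀ k, q.2.1 k = true → ∀ j, (ch j).2.2 k = false) ∧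
    (∀ k (j j' : Fin (arS σ)), (ch j).2.2 k = true → (ch j').2.2 k = true → j = j')

def auxSS (s : Fin n → PQ) (i : Fin n) : Set (PQ × (Fin n → Bool) × (Fin n → Bool)) :=
  {q | q.2.1 i = true ∧ q.1 = s i}

theorem aux_key (A : TA S arS PQ) (s : Fin n → PQ)
    (t : DTree S arS) (m : List ℕ → PQ × (Fin n → Bool) × (Fin n → Bool))
    (hrun : ∀ v u, t.subtreeAt v = some u →
      (auxTA A s).rules (m v) u.label (fun j => m (v ++ [(j : ℕ)])))
    (u : DTree S arS) :
    ∀ v, t.subtreeAt v = some u → ∀ i,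
      ((m v).2.2 i = true →
        ∃! x, (u.subtreeAt x).isSome ∧ m (v ++ x) ∈ auxSS s i) ∧
      ((m v).2.2 i = false →
        ∀ x, (u.subtreeAt x).isSome → m (v ++ x) ∉ auxSS s i) := by
  induction u with
  | node σ w c ih =>
    intro v hv i
    obtain ⟨hA, hh, hb, hex, huni⟩ := hrun v _ hv
    have hchild : ∀ j : Fin (arS σ), t.subtreeAt (v ++ [(j : ℕ)]) = some (c j) :=
      DTree.subtreeAt_child' hv
    have hSSv : m v ∈ auxSS s i ↔ (m v).2.1 i = true :=
      ⟨fun h => h.1, fun h => ⟨h, hh i h⟩⟩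
    -- decompose positions of the node
    have hposx : ∀ x : List ℕ, ((DTree.node σ w c).subtreeAt x).isSome →
        x = [] ∨ ∃ (j : Fin (arS σ)) (p : List ℕ), x = (j : ℕ) :: p ∧
          ((c j).subtreeAt p).isSome := by
      intro x hx
      cases x with
      | nil => exact Or.inl rfl
      | cons j p =>
        right
        simp only [DTree.subtreeAt] at hx
        split at hx
        · next hlt => exact ⟨⟨j, hlt⟩, p, rfl, hx⟩
        · simp at hx
    have hassoc : ∀ (j : ℕ) (p : List ℕ), v ++ ((j : ℕ) :: p) = (v ++ [j]) ++ p := by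
      intro j p; simp
    constructor
    · intro hbt
      rcases (hb i).1 hbt with hhi | ⟨j, hj⟩
      · refine ⟨[], ⟨by simp [DTree.subtreeAt], by simpa using hSSv.2 hhi⟩, ?_⟩
        rintro y ⟨hy, hySS⟩
        rcases hposx y hy with rfl | ⟨j, p, rfl, hp⟩
        · rfl
        · exfalso
          have hbf : (m (v ++ [(j : ℕ)])).2.2 i = false := hex i hhi j
          exact ((ih j (v ++ [(j : ℕ)]) (hchild j) i).2 hbf) p hp
            (by rwa [hassoc j p] at hySS)
      · obtain ⟨x0, ⟨hx0, hx0SS⟩, hx0u⟩ := (ih j (v ++ [(j : ℕ)]) (hchild j) i).1 hj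
        refine ⟨(j : ℕ) :: x0, ⟨?_, ?_⟩, ?_⟩
        · simp only [DTree.subtreeAt]
          rw [dif_pos (show (j:ℕ) < arS σ from j.isLt)]
          exact hx0
        · rwa [hassoc j x0]
        · rintro y ⟨hy, hySS⟩
          rcases hposx y hy with rfl | ⟨j', p, rfl, hp⟩
          · exfalso
            have hhi : (m v).2.1 i = true := (by simpa using hySS : m v ∈ auxSS s i).1
            have := hex i hhi j
            rw [this] at hj; exact Bool.false_ne_true hj
          · cases hb' : (m (v ++ [(j' : ℕ)])).2.2 i with
            | false =>
              exact absurd (by rwa [hassoc j' p] at hySS)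
                (((ih j' (v ++ [(j' : ℕ)]) (hchild j') i).2 hb') p hp)
            | true =>
              have hjj : j' = j := huni i j' j hb' hj
              subst hjj
              have := hx0u p ⟨hp, by rwa [hassoc j' p] at hySS⟩
              rw [this]
    · intro hbf x hx hxSS
      have hnP : ¬((m v).2.1 i = true ∨ ∃ j : Fin (arS σ), (m (v ++ [(j : ℕ)])).2.2 i = true) := by
        intro hp
        rw [(hb i).2 hp] at hbf
        simp at hbf
      push_neg at hnP
      obtain ⟨hh0, hc0⟩ := hnP
      rcases hposx x hx with rfl | ⟨j, p, rfl, hp⟩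
      · exact hh0 (by simpa using hxSS : m v ∈ auxSS s i).1
      · have : (m (v ++ [(j : ℕ)])).2.2 i = false := by
          cases hbv : (m (v ++ [(j : ℕ)])).2.2 i with
          | false => rfl
          | true => exact absurd hbv (hc0 j)
        exact ((ih j (v ++ [(j : ℕ)]) (hchild j) i).2 this) p hp
          (by rwa [hassoc j p] at hxSS)

end AuxTA

/-- Lemma 2: Every n-RQ Q = (A, {s}) with s a tuple of pairwise
distinct states has an equivalent n-RQ Q̃ = (Ã, S̃) such that (1) S̃ = S₁ × ⋯ × S_n
for pairwise disjoint state sets Sᵢ, and (2) every accepting run of Ã assigns, for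
each i, a state of Sᵢ to exactly one position. -/
theorem nrq_normal_form {S PQ : Type} {arS : S → ℕ} [Fintype S] [Fintype PQ] {n : ℕ}
    (A : TA S arS PQ) (s : Fin n → PQ) (hs : Function.Injective s) :
    ∃ (P' : Type) (_ : Fintype P') (A' : TA S arS P') (SS : Fin n → Set P'),
      (∀ i j, i ≠ j → Disjoint (SS i) (SS j)) ∧
      (∀ t : DTree S arS,
        (NRQ.mk A' {g | ∀ i, g i ∈ SS i}).ans t = (NRQ.mk A {s}).ans t) ∧
      (∀ (t : DTree S arS) (m : List ℕ → P'), A'.IsRun t m →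
        ∀ i, ∃! v, v ∈ t.pos ∧ m v ∈ SS i) := by
  classical
  refine ⟨PQ × (Fin n → Bool) × (Fin n → Bool), inferInstance, auxTA A s, auxSS s,
    ?_, ?_, ?_⟩
  · -- disjointness
    intro i j hij
    rw [Set.disjoint_left]
    rintro q ⟨h1, h2⟩ ⟨h1', h2'⟩
    exact hij (hs (h2.symm.trans h2'))
  · -- query equivalence
    intro t
    ext vs
    simp only [NRQ.ans, Set.mem_setOf_eq]
    constructor
    · rintro ⟨hpos, m', hrun', hsel⟩
      refine ⟨hpos, fun v => (m' v).1, ⟨hrun'.1.1, fun v u h => (hrun'.2 v u h).1⟩, ?_⟩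
      simp only [Set.mem_singleton_iff]
      exact funext fun i => (hsel i).2
    · rintro ⟨hpos, m, hrun, hsel⟩
      simp only [Set.mem_singleton_iff] at hsel
      have hsi : ∀ i, m (vs i) = s i := fun i => congrFun hsel i
      have hposE : ∀ i, (t.erase.subtreeAt (vs i)).isSome := by
        intro i
        have := hpos i
        rw [← DTree.pos_erase'] at this
        exact this
      refine ⟨hpos,
        fun v => (m v, fun k => decide (v = vs k), fun k => decide (v <+: vs k)),
        ⟨⟨hrun.1, fun k => by simp⟩, ?_⟩, fun i => ⟨by simp, hsi i⟩⟩
      intro v u hv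
      refine ⟨hrun.2 v u hv, ?_, ?_, ?_, ?_⟩
      · intro k hk
        have hvk : v = vs k := of_decide_eq_true hk
        show m v = s k
        rw [hvk, hsi k]
      · intro k
        simp only [decide_eq_true_eq]
        constructor
        · rintro ⟨r, hr⟩
          cases r with
          | nil =>
            left
            simpa using hr
          | cons j p =>
            right
            cases u with
            | node σ' w' c' =>
              have hk : (t.erase.subtreeAt (vs k)).isSome := hposE k
              rw [← hr, DTree.subtreeAt_append', hv] at hk
              simp only [Option.bind_some, DTree.subtreeAt] at hk
              split at hk
              · next hlt =>
                exact ⟨⟨j, hlt⟩, p, by rw [← hr]; simp⟩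
              · simp at hk
        · rintro (rfl | ⟨j, hj⟩)
          · exact List.prefix_rfl
          · exact (List.prefix_append v [(j : ℕ)]).trans hj
      · intro k hk j
        have hvk : v = vs k := of_decide_eq_true hk
        simp only [decide_eq_false_iff_not]
        intro hp
        have := hp.length_le
        rw [← hvk] at this
        simp at this
      · intro k j j' h1 h2
        have h1' : v ++ [(j : ℕ)] <+: vs k := of_decide_eq_true h1
        have h2' : v ++ [(j' : ℕ)] <+: vs k := of_decide_eq_true h2
        have heq : v ++ [(j : ℕ)] = v ++ [(j' : ℕ)] :=
          (List.prefix_of_prefix_length_le h1' h2' (by simp)).eq_of_length (by simp)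
        have := List.append_cancel_left heq
        simp only [List.cons.injEq, and_true] at this
        exact Fin.ext this
  · -- exactly-one property
    intro t m hrun i
    have hkey := aux_key A s t m (fun v u h => hrun.2 v u h) t [] (by cases t <;> rfl : t.subtreeAt [] = some t) i
    have h1 := hkey.1 (hrun.1.2 i)
    simpa [DTree.pos] using h1
end

section
/- For every n-RQ Q = (A, {s₁, …, s_k}) there exist n-RQs Q̃¹, …, Q̃ᵏ such that for each j ∈ {1,…,k}, Q̃ʲ(t) = (A, {s_j})(t) for every data tree t and Q̃ʲ satisfies the normal-form conditions (its selection set is a product S₁ × ⋯ × S_n of pairwise disjoint state sets, and every accepting run of its automaton assigns, for each i, a state of Sᵢ to exactly one position), and such that Q(t) = ⋃_{j=1}^{k} Q̃ʲ(t) for every data tree t. -/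
/-! Auxiliary development for the normal-form construction. -/

namespace NFProof

variable {S PQ : Type} {arS : S → ℕ} {n : ℕ}

lemma subtreeAt_append (t : DTree S arS) (v w : List ℕ) :
    t.subtreeAt (v ++ w) = (t.subtreeAt v).bind (fun s => s.subtreeAt w) := by
  induction v generalizing t with
  | nil => simp [DTree.subtreeAt]
  | cons i p ih =>
    cases t with
    | node σ val c =>
      simp only [List.cons_append, DTree.subtreeAt]
      split
      · exact ih _
      · rfl

lemma subtreeAt_erase (t : DTree S arS) (v : List ℕ) :
    t.erase.subtreeAt v = (t.subtreeAt v).map DTree.erase := by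
  induction v generalizing t with
  | nil => cases t <;> simp [DTree.erase, DTree.subtreeAt]
  | cons i p ih =>
    cases t with
    | node σ val c =>
      simp only [DTree.erase, DTree.subtreeAt]
      split
      · exact ih _
      · rfl

lemma pos_erase (t : DTree S arS) : t.erase.pos = t.pos := by
  ext v
  simp [DTree.pos, subtreeAt_erase]

lemma label_erase (t : DTree S arS) : t.erase.label = t.label := by
  cases t <;> rfl

lemma nil_mem_pos (t : DTree S arS) : ([] : List ℕ) ∈ t.pos := by
  simp [DTree.pos, DTree.subtreeAt]

lemma cons_mem_pos (σ : S) (val : Option ℕ) (c : Fin (arS σ) → DTree S arS)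
    (z : ℕ) (w : List ℕ) :
    (z :: w) ∈ (DTree.node σ val c).pos ↔ ∃ h : z < arS σ, w ∈ (c ⟨z, h⟩).pos := by
  constructor
  · intro hmem
    simp only [DTree.pos, Set.mem_setOf_eq, DTree.subtreeAt] at hmem
    by_cases h : z < arS σ
    · refine ⟨h, ?_⟩
      rw [dif_pos h] at hmem
      exact hmem
    · rw [dif_neg h] at hmem
      simp at hmem
  · rintro ⟨h, hw⟩
    simp only [DTree.pos, Set.mem_setOf_eq, DTree.subtreeAt, dif_pos h]
    exact hw

/-- States of the normal-form automaton: underlying state, optional "selected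
index chosen at this node", and the set of indices covered in the subtree. -/
abbrev NFState (PQ : Type) (n : ℕ) : Type := PQ × Option (Fin n) × (Fin n → Bool)

/-- Transition relation of the normal-form automaton. -/
def nfRules (A : TA S arS PQ) (sj : Fin n → PQ) :
    NFState PQ n → (σ : S) → (Fin (arS σ) → NFState PQ n) → Prop :=
  fun x σ ch =>
    A.rules x.1 σ (fun c => (ch c).1) ∧
    (∀ i, x.2.1 = some i → x.1 = sj i) ∧
    (∀ i, x.2.2 i = true ↔ (x.2.1 = some i ∨ ∃ c, (ch c).2.2 i = true)) ∧
    (∀ i c, (ch c).2.2 i = true → x.2.1 ≠ some i) ∧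
    (∀ i c c', (ch c).2.2 i = true → (ch c').2.2 i = true → c = c')

/-- The normal-form automaton. -/
def nfTA (A : TA S arS PQ) (sj : Fin n → PQ) : TA S arS (NFState PQ n) where
  init := {x | x.1 ∈ A.init ∧ ∀ i, x.2.2 i = true}
  rules := nfRules A sj

/-- Key invariant: the coverage bit of the root state records exactly whether
the subtree contains a (then unique) position with chosen index `i`. -/
lemma cov_spec (A : TA S arS PQ) (sj : Fin n → PQ) (t : DTree S arS)
    (m : List ℕ → NFState PQ n)
    (hrun : ∀ v s0, t.subtreeAt v = some s0 →
      nfRules A sj (m v) s0.label (fun c => m (v ++ [(c : ℕ)])))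
    (i : Fin n) :
    ((m []).2.2 i = true ↔ ∃ w ∈ t.pos, (m w).2.1 = some i) ∧
    (∀ w w', w ∈ t.pos → w' ∈ t.pos → (m w).2.1 = some i → (m w').2.1 = some i →
      w = w') := by
  induction t generalizing m with
  | node σ val c ih =>
    have hr := hrun [] (DTree.node σ val c) rfl
    have hsub : ∀ (kk : Fin (arS σ)) (v : List ℕ),
        (DTree.node σ val c).subtreeAt ((kk : ℕ) :: v) = (c kk).subtreeAt v := by
      intro kk v
      simp [DTree.subtreeAt, kk.isLt]
    have hchild : ∀ (kk : Fin (arS σ)) (v : List ℕ) s0,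
        (c kk).subtreeAt v = some s0 →
        nfRules A sj (m ((kk : ℕ) :: v)) s0.label
          (fun cc => m ((kk : ℕ) :: v ++ [(cc : ℕ)])) := by
      intro kk v s0 hsv
      exact hrun ((kk : ℕ) :: v) s0 ((hsub kk v).trans hsv)
    have hk := fun (kk : Fin (arS σ)) =>
      ih kk (fun w => m ((kk : ℕ) :: w)) (fun v s0 hsv => hchild kk v s0 hsv)
    have hposc : ∀ (kk : Fin (arS σ)) (w : List ℕ), w ∈ (c kk).pos →
        ((kk : ℕ) :: w) ∈ (DTree.node σ val c).pos := by
      intro kk w hw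
      refine (cons_mem_pos σ val c _ w).mpr ⟨kk.isLt, ?_⟩
      simpa using hw
    constructor
    · constructor
      · intro hT
        rcases (hr.2.2.1 i).mp hT with hb | ⟨cix, hcix⟩
        · exact ⟨[], nil_mem_pos _, hb⟩
        · obtain ⟨w, hwpos, hwch⟩ := (hk cix).1.mp hcix
          exact ⟨(cix : ℕ) :: w, hposc cix w hwpos, hwch⟩
      · rintro ⟨w, hwpos, hwch⟩
        apply (hr.2.2.1 i).mpr
        cases w with
        | nil => exact Or.inl hwch
        | cons z w' =>
          obtain ⟨h, hw'⟩ := (cons_mem_pos σ val c z w').mp hwpos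
          exact Or.inr ⟨⟨z, h⟩, (hk ⟨z, h⟩).1.mpr ⟨w', hw', hwch⟩⟩
    · intro w w' hw hw' hcw hcw'
      cases w with
      | nil =>
        cases w' with
        | nil => rfl
        | cons z w2 =>
          obtain ⟨h, hw2⟩ := (cons_mem_pos σ val c z w2).mp hw'
          exact absurd hcw
            (hr.2.2.2.1 i ⟨z, h⟩ ((hk ⟨z, h⟩).1.mpr ⟨w2, hw2, hcw'⟩))
      | cons z w2 =>
        obtain ⟨h, hw2⟩ := (cons_mem_pos σ val c z w2).mp hw
        cases w' with
        | nil =>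
          exact absurd hcw'
            (hr.2.2.2.1 i ⟨z, h⟩ ((hk ⟨z, h⟩).1.mpr ⟨w2, hw2, hcw⟩))
        | cons z' w2' =>
          obtain ⟨h', hw2'⟩ := (cons_mem_pos σ val c z' w2').mp hw'
          have hzz : (⟨z, h⟩ : Fin (arS σ)) = ⟨z', h'⟩ :=
            hr.2.2.2.2 i ⟨z, h⟩ ⟨z', h'⟩
              ((hk ⟨z, h⟩).1.mpr ⟨w2, hw2, hcw⟩)
              ((hk ⟨z', h'⟩).1.mpr ⟨w2', hw2', hcw'⟩)
          have hz : z = z' := congrArg Fin.val hzz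
          subst hz
          have : w2 = w2' := (hk ⟨z, h⟩).2 w2 w2' hw2 hw2' hcw hcw'
          rw [this]

/-- The normal-form query answers exactly like the original singleton query. -/
lemma nf_ans_eq (A : TA S arS PQ) (sj : Fin n → PQ) (hinj : Function.Injective sj)
    (t : DTree S arS) :
    (NRQ.mk (nfTA A sj) {g | ∀ i, g i ∈ {x : NFState PQ n | x.2.1 = some i}}).ans t
      = (NRQ.mk A ({sj} : Set (Fin n → PQ))).ans t := by
  classical
  ext vs
  simp only [NRQ.ans, Set.mem_setOf_eq, Set.mem_singleton_iff]
  constructor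
  · rintro ⟨hpos, m', hrun', hsel⟩
    refine ⟨hpos, fun v => (m' v).1,
      ⟨hrun'.1.1, fun v s0 hsv => (hrun'.2 v s0 hsv).1⟩, ?_⟩
    funext i
    have hps : vs i ∈ t.erase.pos := by rw [pos_erase]; exact hpos i
    obtain ⟨s0, hs0⟩ := Option.isSome_iff_exists.mp hps
    exact (hrun'.2 (vs i) s0 hs0).2.1 i (hsel i)
  · rintro ⟨hpos, m, hrun, hsel⟩
    have hmi : ∀ i, m (vs i) = sj i := fun i => congrFun hsel i
    set bsel : List ℕ → Option (Fin n) := fun v =>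
      if h : ∃ i, vs i = v then some h.choose else none with hbseldef
    have hvsinj : ∀ i i', vs i = vs i' → i = i' := by
      intro i i' hvv
      apply hinj
      rw [← hmi i, ← hmi i', hvv]
    have hbsel_eq : ∀ i, bsel (vs i) = some i := by
      intro i
      have hex : ∃ i', vs i' = vs i := ⟨i, rfl⟩
      simp only [hbseldef, dif_pos hex]
      exact congrArg some (hvsinj _ _ hex.choose_spec)
    have hbsel_some : ∀ v i, bsel v = some i → vs i = v := by
      intro v i hb
      simp only [hbseldef] at hb
      split at hb
      · rename_i h
        cases hb
        exact h.choose_spec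
      · cases hb
    refine ⟨hpos, fun v => (m v, bsel v, fun i => decide (v <+: vs i)),
      ⟨⟨hrun.1, fun i => by show decide ([] <+: vs i) = true; exact decide_eq_true List.nil_prefix⟩, ?_⟩, fun i => hbsel_eq i⟩
    intro v s0 hsv
    refine ⟨hrun.2 v s0 hsv, ?_, ?_, ?_, ?_⟩
    · intro i hb
      have hvi := hbsel_some v i hb
      show m v = sj i
      rw [← hvi]
      exact hmi i
    · intro i
      simp only [decide_eq_true_iff]
      constructor
      · intro hpre
        obtain ⟨r, hr⟩ := hpre
        cases r with
        | nil =>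
          left
          have hvi : vs i = v := by simpa using hr.symm
          show bsel v = some i
          rw [← hvi]
          exact hbsel_eq i
        | cons c0 rest =>
          right
          have hmem : (t.erase.subtreeAt (vs i)).isSome := by
            have h := hpos i
            rw [← pos_erase] at h
            exact h
          rw [← hr, subtreeAt_append, hsv] at hmem
          simp only [Option.bind_some] at hmem
          cases s0 with
          | node σ' w' ch' =>
            simp only [DTree.subtreeAt] at hmem
            split at hmem
            · rename_i hc0
              refine ⟨⟨c0, hc0⟩, ?_⟩
              refine ⟨rest, ?_⟩
              rw [List.append_assoc]
              exact hr
            · simp at hmem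
      · rintro (hb | ⟨cfin, hc⟩)
        · have hvi := hbsel_some v i hb
          rw [← hvi]
        · exact (List.prefix_append v [(cfin : ℕ)]).trans hc
    · intro i cfin hc hb
      have h1 := hbsel_some v i hb
      have h2 : (v ++ [(cfin : ℕ)]) <+: vs i := of_decide_eq_true hc
      rw [h1] at h2
      have := h2.length_le
      simp at this
    · intro i cf cf' hc hc'
      have h2 : (v ++ [(cf : ℕ)]) <+: vs i := of_decide_eq_true hc
      have h2' : (v ++ [(cf' : ℕ)]) <+: vs i := of_decide_eq_true hc'
      have hlen : (v ++ [(cf : ℕ)]).length = (v ++ [(cf' : ℕ)]).length := by simp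
      have hle : (v ++ [(cf : ℕ)]) <+: (v ++ [(cf' : ℕ)]) :=
        List.prefix_of_prefix_length_le h2 h2' (le_of_eq hlen)
      have heq := hle.eq_of_length hlen
      have : ([(cf : ℕ)] : List ℕ) = [(cf' : ℕ)] := by
        exact List.append_cancel_left heq
      have hval : (cf : ℕ) = (cf' : ℕ) := by
        simpa using this
      exact Fin.ext hval

end NFProof

/-- Every n-RQ Q = (A, {s₁,…,s_k}) is the union of k n-RQs
Q̃¹, …, Q̃ᵏ in normal form, where Q̃ʲ is equivalent with (A, {s_j}). -/
theorem nrq_union_of_normal_forms {S PQ : Type} {arS : S → ℕ} [Fintype S] [Fintype PQ]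
    {n k : ℕ} (A : TA S arS PQ) (s : Fin k → Fin n → PQ)
    (hs : ∀ j, Function.Injective (s j)) :
    ∃ (P' : Fin k → Type) (_ : ∀ j, Fintype (P' j)) (A' : ∀ j, TA S arS (P' j))
      (SS : ∀ j, Fin n → Set (P' j)),
      (∀ j, ∀ i i', i ≠ i' → Disjoint (SS j i) (SS j i')) ∧
      (∀ j (t : DTree S arS) (m : List ℕ → P' j), (A' j).IsRun t m →
        ∀ i, ∃! v, v ∈ t.pos ∧ m v ∈ SS j i) ∧
      (∀ j (t : DTree S arS),
        (NRQ.mk (A' j) {g | ∀ i, g i ∈ SS j i}).ans t = (NRQ.mk A {s j}).ans t) ∧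
      (∀ t : DTree S arS,
        (NRQ.mk A (Set.range s)).ans t =
          ⋃ j, (NRQ.mk (A' j) {g | ∀ i, g i ∈ SS j i}).ans t) := by
  classical
  open NFProof in
  refine ⟨fun _ => NFState PQ n, fun _ => inferInstance, fun j => nfTA A (s j),
    fun j i => {x | x.2.1 = some i}, ?_, ?_, ?_, ?_⟩
  · intro j i i' hne
    rw [Set.disjoint_left]
    rintro x hx hx'
    have hx1 : x.2.1 = some i := hx
    have hx2 : x.2.1 = some i' := hx'
    exact hne (Option.some.inj (hx1.symm.trans hx2))
  · intro j t m hrun i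
    have hcov := NFProof.cov_spec A (s j) t m hrun.2 i
    obtain ⟨w, hw, hch⟩ := hcov.1.mp (hrun.1.2 i)
    exact ⟨w, ⟨hw, hch⟩, fun y hy => hcov.2 y w hy.1 hw hy.2 hch⟩
  · intro j t
    exact NFProof.nf_ans_eq A (s j) (hs j) t
  · intro t
    have hrw :
        (⋃ j, (NRQ.mk (NFProof.nfTA A (s j))
            {g | ∀ i, g i ∈ {x : NFProof.NFState PQ n | x.2.1 = some i}}).ans t)
          = ⋃ j, (NRQ.mk A ({s j} : Set (Fin n → PQ))).ans t :=
      Set.iUnion_congr fun j => NFProof.nf_ans_eq A (s j) (hs j) t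
    rw [hrw]
    ext vs
    simp only [NRQ.ans, Set.mem_setOf_eq, Set.mem_iUnion, Set.mem_range,
      Set.mem_singleton_iff]
    constructor
    · rintro ⟨hpos, m, hrun, jj, hjj⟩
      exact ⟨jj, hpos, m, hrun, hjj.symm⟩
    · rintro ⟨jj, hpos, m, hrun, hjj⟩
      exact ⟨hpos, m, hrun, jj, hjj.symm⟩
end

section
/- Let Tr be a DetLinTT^V and Q an n-RQ. If Tr (strongly) preserves Q, then every n-RQ Q' satisfying Equation (2) (i.e., val(Q'(t_d)) = ⋃_{t ∈ Tr⁻¹(t_d)} val(Q(t)) for all t_d ∈ rng(Tr)) also satisfies Equation (1) (i.e., val(Q'(Tr(t))) = val(Q(t)) for all t ∈ dom(Tr)). -/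
/-- If Tr strongly preserves Q, then every n-RQ Q' satisfying
Equation (2) (the weak-preservation equation) also satisfies Equation (1). -/
theorem eq2_implies_eq1_of_preserves {S D PT PQ : Type} {arS : S → ℕ} {arD : D → ℕ}
    [Fintype S] [Fintype D] [Fintype PT] [Fintype PQ] {n : ℕ}
    (Tr : LinTTV S arS D arD PT) (hdet : Tr.Deterministic)
    (Q : NRQ S arS PQ n) (hsel : ∀ s ∈ Q.sel, Function.Injective s)
    (hpres : StronglyPreservesRel Tr.rel Q)
    (P' : Type) [Fintype P'] (Q' : NRQ D arD P' n)
    (hsel' : ∀ s ∈ Q'.sel, Function.Injective s)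
    (heq2 : ∀ td ∈ Tr.rng, Q'.valAns td = ⋃ t ∈ Tr.preim td, Q.valAns t) :
    ∀ t t', Tr.rel t t' → Q'.valAns t' = Q.valAns t := by
  intro t t' hrel
  obtain ⟨P2, _, Q2, _, hQ2⟩ := hpres
  have key : ∀ u, Tr.rel u t' → Q.valAns u = Q.valAns t := by
    intro u hu
    rw [← hQ2 u t' hu, hQ2 t t' hrel]
  rw [heq2 t' ⟨t, hrel⟩]
  ext d
  simp only [Set.mem_iUnion, Set.mem_setOf_eq, LinTTV.preim]
  constructor
  · rintro ⟨u, hu, hd⟩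
    rwa [key u hu] at hd
  · intro hd
    exact ⟨t, hrel, hd⟩
end
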